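/- For every m ≥ 1, let c_m be the number of crossable boards f : Fin m × Fin 3 → Bool. Then, as an identity of real numbers, 41 · 2^{m+1} · c_m = (41 − 7·√41)·(7 − √41)^m + (41 + 7·√41)·(7 + √41)^m. -/

import Mathlib

def Crossable (m w : ℕ) (f : Fin m × Fin w → Bool) : Prop :=
  ∃ (k : ℕ) (p : Fin (k + 1) → Fin m × Fin w),
    (∀ i, f (p i) = true) ∧
    ((p 0).1 : ℕ) = 0 ∧
    ((p (Fin.last k)).1 : ℕ) = m - 1 ∧
    ∀ i : Fin k,
      |((p i.succ).1 : ℤ) - ((p i.castSucc).1 : ℤ)| ≤ 1 ∧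
      |((p i.succ).2 : ℤ) - ((p i.castSucc).2 : ℤ)| ≤ 1

abbrev Row := Fin 3 → Bool
def adjB (a b : Fin 3) : Bool := decide (a.val ≤ b.val + 1 ∧ b.val ≤ a.val + 1)
def nbr (S pat : Row) : Row := fun j => pat j && ((List.finRange 3).any fun c => S c && adjB c j)
def cl1 (pat N : Row) : Row := fun j => pat j && (N j || ((List.finRange 3).any fun c => N c && adjB c j))
def hstep (S pat : Row) : Row := cl1 pat (cl1 pat (nbr S pat))
def bot : Row := fun _ => false

lemma K1 : ∀ pat : Row, hstep bot pat = bot := by decide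
lemma K0 : ∀ S pat : Row, ∀ j, hstep S pat j = true → pat j = true := by decide
lemma K3 : ∀ S pat : Row, ∀ c y, S c = true → pat y = true → adjB c y = true →
    hstep S pat y = true := by decide
lemma K4 : ∀ S pat : Row, pat 1 = true → hstep S pat ≠ bot → hstep S pat 1 = true := by decide
lemma K5 : ∀ S pat : Row, ∀ j, hstep S pat j = true →
    ∃ c e₁ e₂, S c = true ∧ adjB c e₁ = true ∧ pat e₁ = true ∧ adjB e₁ e₂ = true ∧
      pat e₂ = true ∧ adjB e₂ j = true ∧ pat j = true := by decide
lemma adjB_symm : ∀ a b : Fin 3, adjB a b = adjB b a := by decide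
lemma adjB_one : ∀ j : Fin 3, adjB 1 j = true := by decide
lemma adj_mid : ∀ j j₂ j' : Fin 3, adjB j j₂ = true → adjB j j' = true →
    ¬ adjB j₂ j' = true → j = 1 := by decide

def gE {m : ℕ} (g : Fin m → Row) (i : ℕ) : Row := if h : i < m then g ⟨i, h⟩ else bot

def Rs {m : ℕ} (g : Fin m → Row) : ℕ → Row
  | 0 => gE g 0
  | i + 1 => hstep (Rs g i) (gE g (i + 1))

inductive T {m : ℕ} (g : Fin m → Row) : ℕ → Fin 3 → Prop
  | base (i : ℕ) (j : Fin 3) : Rs g i j = true → T g i j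
  | step (i i' : ℕ) (j j' : Fin 3) : gE g i j = true → T g i' j' →
      (i' = i ∨ i' = i + 1) → adjB j j' = true → T g i j

variable {m : ℕ} {g : Fin m → Row}

lemma Rs_bot_succ (i : ℕ) (h : Rs g i = bot) : Rs g (i + 1) = bot := by
  rw [Rs, h, K1]

lemma Rs_bot_le {i i' : ℕ} (hle : i ≤ i') (h : Rs g i = bot) : Rs g i' = bot := by
  induction i' with
  | zero => have : i = 0 := by omega
            subst this; exact h
  | succ k ih =>
      rcases Nat.lt_or_ge i (k+1) with hlt | hge
      · exact Rs_bot_succ k (ih (by omega))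
      · have : i = k + 1 := by omega
        subst this; exact h

lemma T_ne_bot {i : ℕ} {j : Fin 3} (h : T g i j) : Rs g i ≠ bot := by
  induction h with
  | base i j hij =>
      intro hb; rw [hb] at hij; simp [bot] at hij
  | step i i' j j' hg hT hor hadj ih =>
      intro hb
      rcases hor with rfl | rfl
      · exact ih hb
      · exact ih (Rs_bot_succ i hb)

lemma Rs_mid {i : ℕ} (hg : gE g i 1 = true) (hb : Rs g i ≠ bot) : Rs g i 1 = true := by
  cases i with
  | zero => exact hg
  | succ k => exact K4 _ _ hg hb

lemma T_down {i : ℕ} {j : Fin 3} (h : T g i j) :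
    ∀ j' : Fin 3, gE g (i + 1) j' = true → adjB j j' = true → T g (i + 1) j' := by
  induction h with
  | base i j hij =>
      intro j' hg' hadj
      exact T.base _ _ (by rw [Rs]; exact K3 _ _ _ _ hij hg' hadj)
  | step i i' j j₂ hg hT hor hadj ih =>
      intro j' hg' hjj'
      by_cases hc : adjB j₂ j' = true
      · rcases hor with rfl | rfl
        · exact ih j' hg' hc
        · exact T.step _ _ _ _ hg' hT (Or.inl rfl) (by rw [adjB_symm]; exact hc)
      · have hj1 : j = 1 := adj_mid j j₂ j' hadj hjj' hc
        have hTij : T g i j := T.step _ _ _ _ hg hT hor hadj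
        have hb : Rs g i ≠ bot := T_ne_bot hTij
        have h1 : Rs g i 1 = true := Rs_mid (hj1 ▸ hg) hb
        exact T.base _ _ (by rw [Rs]; exact K3 _ _ _ _ h1 hg' (adjB_one j'))

lemma T_closure {i i'' : ℕ} {j j' : Fin 3} (h : T g i j) (hg' : gE g i'' j' = true)
    (hrow : i'' = i ∨ i'' = i + 1 ∨ i = i'' + 1) (hadj : adjB j j' = true) : T g i'' j' := by
  rcases hrow with rfl | rfl | hr
  · exact T.step _ _ _ _ hg' h (Or.inl rfl) (by rw [adjB_symm]; exact hadj)
  · exact T_down h j' hg' hadj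
  · exact T.step _ _ _ _ hg' (hr ▸ h) (Or.inr rfl) (by rw [adjB_symm]; exact hadj)

lemma adjB_of_int {a b : Fin 3} (h : |(a : ℤ) - (b : ℤ)| ≤ 1) : adjB a b = true := by
  rw [abs_le] at h
  have h1 : (a : ℤ) = (a.val : ℤ) := rfl
  have h2 : (b : ℤ) = (b.val : ℤ) := rfl
  apply decide_eq_true
  omega

lemma gE_fin {n : ℕ} (g : Fin n → Row) (b : Fin n) : gE g b.val = g b := by
  simp [gE, b.isLt]

/-- Crossable implies the monotone reach at the last row is nonempty. -/
lemma cross_to_state (n : ℕ) (f : Fin (n + 1) × Fin 3 → Bool)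
    (h : Crossable (n + 1) 3 f) : Rs (fun i j => f (i, j)) n ≠ bot := by
  set g : Fin (n + 1) → Row := fun i j => f (i, j) with hg
  obtain ⟨k, p, htrue, h0, hlast, hsteps⟩ := h
  have hTr : ∀ (i : Fin (k + 1)), gE g ((p i).1 : ℕ) (p i).2 = true := by
    intro i
    rw [show ((p i).1 : ℕ) = ((p i).1 : Fin (n+1)).val from rfl, gE_fin]
    exact htrue i
  have claim : ∀ t (ht : t < k + 1), T g ((p ⟨t, ht⟩).1 : ℕ) (p ⟨t, ht⟩).2 := by
    intro t
    induction t with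
    | zero =>
        intro ht
        have h00 : (⟨0, ht⟩ : Fin (k + 1)) = 0 := rfl
        rw [h00]
        apply T.base
        rw [h0, Rs]
        have := hTr 0
        rw [h0] at this
        exact this
    | succ t ih =>
        intro ht
        have ht' : t < k + 1 := by omega
        have hT := ih ht'
        have htk : t < k := by omega
        set i : Fin k := ⟨t, htk⟩ with hi
        have hcast : i.castSucc = (⟨t, ht'⟩ : Fin (k+1)) := rfl
        have hsucc : i.succ = (⟨t + 1, ht⟩ : Fin (k+1)) := rfl
        obtain ⟨hrow, hcol⟩ := hsteps i
        rw [hcast, hsucc] at hrow hcol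
        set a := p ⟨t, ht'⟩ with ha
        set b := p ⟨t + 1, ht⟩ with hb
        have hrown : (b.1 : ℕ) = (a.1 : ℕ) ∨ (b.1 : ℕ) = (a.1 : ℕ) + 1 ∨
            (a.1 : ℕ) = (b.1 : ℕ) + 1 := by
          rw [abs_le] at hrow
          have h1 : ((b.1 : Fin (n+1)) : ℤ) = ((b.1 : ℕ) : ℤ) := rfl
          have h2 : ((a.1 : Fin (n+1)) : ℤ) = ((a.1 : ℕ) : ℤ) := rfl
          omega
        exact T_closure hT (hTr ⟨t + 1, ht⟩) hrown (by rw [adjB_symm]; exact adjB_of_int hcol)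
  have hTend := claim k (by omega)
  have hlast' : ((p ⟨k, by omega⟩).1 : ℕ) = n := by
    have : Fin.last k = ⟨k, by omega⟩ := rfl
    rw [this] at hlast
    simpa using hlast
  rw [hlast'] at hTend
  exact T_ne_bot hTend

section PathBuild
variable {n : ℕ} (f : Fin (n + 1) × Fin 3 → Bool)

/-- symmetric step relation matching the Crossable conditions -/
def stepOK (x y : Fin (n + 1) × Fin 3) : Prop :=
  (x.1.val ≤ y.1.val + 1 ∧ y.1.val ≤ x.1.val + 1) ∧ adjB x.2 y.2 = true

lemma stepOK_symm {x y : Fin (n + 1) × Fin 3} (h : stepOK x y) : stepOK y x := by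
  obtain ⟨⟨h1, h2⟩, h3⟩ := h
  exact ⟨⟨h2, h1⟩, by rw [adjB_symm]; exact h3⟩

/-- build a path (head = current cell, getLast = a row-0 cell) for any cell in R. -/
lemma path_build (g : Fin (n + 1) → Row) (hgf : ∀ i j, g i j = f (i, j)) :
    ∀ i (hi : i < n + 1) (j : Fin 3), Rs g i j = true →
    ∃ (a : Fin (n + 1) × Fin 3) (l : List (Fin (n + 1) × Fin 3)),
      a = (⟨i, hi⟩, j) ∧ List.Chain (stepOK) a l ∧ (∀ x ∈ a :: l, f x = true) ∧
      ((a :: l).getLast (by simp)).1.val = 0 := by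
  intro i
  induction i with
  | zero =>
      intro hi j hj
      refine ⟨(⟨0, hi⟩, j), [], rfl, List.Chain.nil, ?_, rfl⟩
      intro x hx
      simp at hx
      subst hx
      rw [← hgf]
      rw [Rs, show gE g 0 = g ⟨0, hi⟩ from by simp [gE]] at hj
      exact hj
  | succ i ih =>
      intro hi j hj
      have hi' : i < n + 1 := by omega
      rw [Rs] at hj
      obtain ⟨c, e₁, e₂, hc, hce, he₁, he12, he₂, he2j, hpj⟩ := K5 _ _ _ hj
      have hgE : gE g (i + 1) = g ⟨i + 1, hi⟩ := by
        simp [gE, hi]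
      rw [hgE] at he₁ he₂ hpj
      obtain ⟨a, l, ha, hchain, htrue, hlast⟩ := ih hi' c hc
      refine ⟨(⟨i + 1, hi⟩, j), (⟨i + 1, hi⟩, e₂) :: (⟨i + 1, hi⟩, e₁) :: a :: l, rfl, ?_, ?_, ?_⟩
      · refine List.Chain.cons ⟨by simp, by rw [adjB_symm]; exact he2j⟩
          (List.Chain.cons ⟨by simp, by rw [adjB_symm]; exact he12⟩
          (List.Chain.cons ⟨by simp [ha]; omega, by rw [ha, adjB_symm]; simpa using hce⟩ hchain))
      · intro x hx
        simp only [List.mem_cons] at hx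
        rcases hx with rfl | rfl | rfl | hx
        · rw [← hgf]; exact hpj
        · rw [← hgf]; exact he₂
        · rw [← hgf]; exact he₁
        · exact htrue x (by simpa using hx)
      · rw [List.getLast_cons, List.getLast_cons, List.getLast_cons]
        exact hlast
        all_goals simp

end PathBuild

lemma int_of_adjB : ∀ a b : Fin 3, adjB a b = true → |(a : ℤ) - (b : ℤ)| ≤ 1 := by decide

lemma state_to_cross (n : ℕ) (f : Fin (n + 1) × Fin 3 → Bool)
    (h : Rs (fun i j => f (i, j)) n ≠ bot) : Crossable (n + 1) 3 f := by
  set g : Fin (n + 1) → Row := fun i j => f (i, j) with hg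
  have hj : ∃ j, Rs g n j = true := by
    by_contra hc
    push_neg at hc
    apply h
    funext j
    have := hc j
    simp [bot] at this ⊢
    exact this
  obtain ⟨j, hj⟩ := hj
  obtain ⟨a, l, ha, hchain, htrue, hlast⟩ :=
    path_build f g (fun i j => rfl) n (by omega) j hj
  have hLlen : ((a :: l).reverse).length = l.length + 1 := by simp
  have hch' : List.Chain' (stepOK) ((a :: l).reverse) := by
    unfold List.Chain'
    rw [List.isChain_reverse]
    have hc0 : List.Chain' (stepOK) (a :: l) := hchain
    apply List.IsChain.imp _ hc0
    intro x y hxy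
    exact stepOK_symm hxy
  -- membership
  have hmem : ∀ (t : ℕ) (ht : t < l.length + 1),
      f ((a :: l).reverse.get ⟨t, by omega⟩) = true := by
    intro t ht
    apply htrue
    have : (a :: l).reverse.get ⟨t, by omega⟩ ∈ (a :: l).reverse := List.get_mem _ _
    rwa [List.mem_reverse] at this
  have key0 : ((a :: l).reverse.get ⟨0, by omega⟩).1.val = 0 := by
    have e : (a :: l).reverse.get ⟨0, by omega⟩ = (a :: l).get ⟨(a :: l).length - 1 - 0, by simp⟩ :=
      List.get_reverse' _ _ _
    rw [List.getLast_eq_getElem] at hlast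
    have e2 : (a :: l).length - 1 - 0 = (a :: l).length - 1 := rfl
    rw [e]
    exact hlast
  have keyL : ((a :: l).reverse.get ⟨l.length, by omega⟩).1.val = n := by
    have e : (a :: l).reverse.get ⟨l.length, by omega⟩ =
        (a :: l).get ⟨(a :: l).length - 1 - l.length, by simp⟩ := List.get_reverse' _ _ _
    have e2 : (a :: l).length - 1 - l.length = 0 := by simp
    rw [e]
    have : (a :: l).get ⟨(a :: l).length - 1 - l.length, by simp⟩ =
        (a :: l).get ⟨0, by simp⟩ := by congr 1; exact Fin.ext e2
    rw [this]
    show a.1.val = n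
    rw [ha]
  have keyS : ∀ (t : ℕ) (ht : t < l.length),
      |(((a :: l).reverse.get ⟨t + 1, by omega⟩).1 : ℤ) -
        (((a :: l).reverse.get ⟨t, by omega⟩).1 : ℤ)| ≤ 1 ∧
      |(((a :: l).reverse.get ⟨t + 1, by omega⟩).2 : ℤ) -
        (((a :: l).reverse.get ⟨t, by omega⟩).2 : ℤ)| ≤ 1 := by
    intro t ht
    have hstep := (List.isChain_iff_getElem.1 hch') t (by omega)
    obtain ⟨⟨hr1, hr2⟩, hcol⟩ := hstep
    constructor
    · rw [abs_le]
      have e1 : ((((a :: l).reverse.get ⟨t + 1, by omega⟩).1 : Fin (n+1)) : ℤ)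
          = ((((a :: l).reverse.get ⟨t + 1, by omega⟩).1.val : ℕ) : ℤ) := rfl
      have e2 : ((((a :: l).reverse.get ⟨t, by omega⟩).1 : Fin (n+1)) : ℤ)
          = ((((a :: l).reverse.get ⟨t, by omega⟩).1.val : ℕ) : ℤ) := rfl
      simp only [List.get_eq_getElem] at e1 e2 ⊢
      omega
    · rw [abs_sub_comm]
      exact int_of_adjB _ _ hcol
  exact ⟨l.length, fun t => (a :: l).reverse.get ⟨t.val, by omega⟩,
    fun i => hmem i.val i.isLt, key0, keyL, fun i => keyS i.val i.isLt⟩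

theorem cross_iff (n : ℕ) (f : Fin (n + 1) × Fin 3 → Bool) :
    Crossable (n + 1) 3 f ↔ Rs (fun i j => f (i, j)) n ≠ bot :=
  ⟨cross_to_state n f, state_to_cross n f⟩

section Counting

def cnt (n : ℕ) (s : Row) : ℕ :=
  (Finset.univ.filter (fun g : Fin (n + 1) → Row => Rs g n = s)).card

def tc (s₀ s : Row) : ℕ := (Finset.univ.filter (fun r : Row => hstep s₀ r = s)).card

lemma gE_init {n : ℕ} (g : Fin (n + 2) → Row) {i : ℕ} (hi : i ≤ n) :
    gE (Fin.init g) i = gE g i := by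
  have h1 : i < n + 1 := by omega
  have h2 : i < n + 2 := by omega
  simp only [gE, dif_pos h1, dif_pos h2]
  rfl

lemma Rs_init {n : ℕ} (g : Fin (n + 2) → Row) : ∀ i ≤ n, Rs (Fin.init g) i = Rs g i := by
  intro i
  induction i with
  | zero => intro _; rw [Rs, Rs, gE_init g (by omega)]
  | succ k ih =>
      intro hk
      rw [Rs, Rs, ih (by omega), gE_init g hk]

lemma Rs_last {n : ℕ} (g : Fin (n + 2) → Row) :
    Rs g (n + 1) = hstep (Rs (Fin.init g) n) (g (Fin.last (n + 1))) := by
  rw [Rs, Rs_init g n le_rfl]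
  have : gE g (n + 1) = g (Fin.last (n + 1)) := by simp [gE]; rfl
  rw [this]

lemma cnt_succ (n : ℕ) (s : Row) : cnt (n + 1) s = ∑ s₀ : Row, cnt n s₀ * tc s₀ s := by
  have hcard : cnt (n + 1) s =
      (Finset.univ.filter
        (fun p : (Fin (n + 1) → Row) × Row => hstep (Rs p.1 n) p.2 = s)).card := by
    apply Finset.card_bij' (fun g _ => (Fin.init g, g (Fin.last (n + 1))))
      (fun p _ => Fin.snoc p.1 p.2)
    · intro g hg
      simp only [Finset.mem_filter, Finset.mem_univ, true_and] at hg ⊢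
      rw [← Rs_last]; exact hg
    · intro p hp
      simp only [Finset.mem_filter, Finset.mem_univ, true_and] at hp ⊢
      rw [Rs_last, Fin.snoc_last, Fin.init_snoc]
      exact hp
    · intro g _; exact Fin.snoc_init_self g
    · intro p _
      ext
      · rw [Fin.init_snoc]
      · rw [Fin.snoc_last]
  rw [hcard]
  rw [Finset.card_eq_sum_card_fiberwise (f := fun p => Rs p.1 n) (t := Finset.univ)
    (fun x _ => Finset.mem_univ _)]
  apply Finset.sum_congr rfl
  intro s₀ _
  have hset : (Finset.univ.filter
        (fun p : (Fin (n + 1) → Row) × Row => hstep (Rs p.1 n) p.2 = s)).filter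
        (fun p => Rs p.1 n = s₀) =
      (Finset.univ.filter (fun a : Fin (n + 1) → Row => Rs a n = s₀)) ×ˢ
        (Finset.univ.filter (fun r : Row => hstep s₀ r = s)) := by
    ext ⟨a, r⟩
    simp only [Finset.mem_filter, Finset.mem_univ, true_and, Finset.mem_product]
    constructor
    · rintro ⟨h1, h2⟩
      rw [h2] at h1
      exact ⟨h2, h1⟩
    · rintro ⟨h1, h2⟩
      rw [h1]
      exact ⟨h2, rfl⟩
  rw [hset, Finset.card_product]
  rfl

lemma cnt_zero (s : Row) : cnt 0 s = 1 := by
  rw [cnt]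
  rw [show (Finset.univ.filter (fun g : Fin 1 → Row => Rs g 0 = s)) = {fun _ => s} from ?_]
  · exact Finset.card_singleton _
  · ext g
    simp only [Finset.mem_filter, Finset.mem_univ, true_and, Finset.mem_singleton]
    have hRs : Rs g 0 = g 0 := by rw [Rs]; simp [gE]
    rw [hRs]
    constructor
    · intro h; funext i; rw [Fin.fin_one_eq_zero i]; exact h
    · intro h; rw [h]


end Counting

section Invariant

def w1 : Row := ![true, false, false]
def w2 : Row := ![false, true, false]
def w3 : Row := ![false, false, true]
def w4 : Row := ![true, true, false]
def w5 : Row := ![true, false, true]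
def w6 : Row := ![false, true, true]
def w7 : Row := ![true, true, true]

lemma row_cases : ∀ s : Row, s = bot ∨ s = w1 ∨ s = w2 ∨ s = w3 ∨ s = w4 ∨ s = w5 ∨
    s = w6 ∨ s = w7 := by decide

lemma huniv : (Finset.univ : Finset Row) = {bot, w1, w2, w3, w4, w5, w6, w7} := by
  ext s
  simp only [Finset.mem_univ, Finset.mem_insert, Finset.mem_singleton, true_iff]
  exact row_cases s

lemma sum_row (F : Row → ℕ) : ∑ s : Row, F s =
    F bot + F w1 + F w2 + F w3 + F w4 + F w5 + F w6 + F w7 := by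
  rw [huniv]
  rw [Finset.sum_insert (by decide), Finset.sum_insert (by decide),
    Finset.sum_insert (by decide), Finset.sum_insert (by decide),
    Finset.sum_insert (by decide), Finset.sum_insert (by decide),
    Finset.sum_insert (by decide), Finset.sum_singleton]
  ring

end Invariant

def BQ : ℕ → ℕ × ℕ
  | 0 => (1, 1)
  | k + 1 => (6 * (BQ k).1 + (BQ k).2, 4 * (BQ k).1 + (BQ k).2)

lemma cnt_inv (k : ℕ) : cnt k w1 = (BQ k).1 ∧ cnt k w2 = (BQ k).1 ∧ cnt k w3 = (BQ k).1 ∧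
    cnt k w4 = (BQ k).1 ∧ cnt k w5 = (BQ k).2 ∧ cnt k w6 = (BQ k).1 ∧ cnt k w7 = (BQ k).1 := by
  induction k with
  | zero =>
      refine ⟨?_, ?_, ?_, ?_, ?_, ?_, ?_⟩ <;> rw [cnt_zero] <;> rfl
  | succ k ih =>
      obtain ⟨h1, h2, h3, h4, h5, h6, h7⟩ := ih
      refine ⟨?_, ?_, ?_, ?_, ?_, ?_, ?_⟩
      · rw [cnt_succ, sum_row (fun s₀ => cnt k s₀ * tc s₀ w1)]
        rw [h1, h2, h3, h4, h5, h6, h7]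
        simp only [show tc bot w1 = 0 from by decide, show tc w1 w1 = 2 from by decide, show tc w2 w1 = 1 from by decide, show tc w3 w1 = 0 from by decide, show tc w4 w1 = 1 from by decide, show tc w5 w1 = 1 from by decide, show tc w6 w1 = 1 from by decide, show tc w7 w1 = 1 from by decide]
        show _ = (BQ (k+1)).1
        simp only [BQ]
        ring
      · rw [cnt_succ, sum_row (fun s₀ => cnt k s₀ * tc s₀ w2)]
        rw [h1, h2, h3, h4, h5, h6, h7]
        simp only [show tc bot w2 = 0 from by decide, show tc w1 w2 = 1 from by decide, show tc w2 w2 = 1 from by decide, show tc w3 w2 = 1 from by decide, show tc w4 w2 = 1 from by decide, show tc w5 w2 = 1 from by decide, show tc w6 w2 = 1 from by decide, show tc w7 w2 = 1 from by decide]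
        show _ = (BQ (k+1)).1
        simp only [BQ]
        ring
      · rw [cnt_succ, sum_row (fun s₀ => cnt k s₀ * tc s₀ w3)]
        rw [h1, h2, h3, h4, h5, h6, h7]
        simp only [show tc bot w3 = 0 from by decide, show tc w1 w3 = 0 from by decide, show tc w2 w3 = 1 from by decide, show tc w3 w3 = 2 from by decide, show tc w4 w3 = 1 from by decide, show tc w5 w3 = 1 from by decide, show tc w6 w3 = 1 from by decide, show tc w7 w3 = 1 from by decide]
        show _ = (BQ (k+1)).1
        simp only [BQ]
        ring
      · rw [cnt_succ, sum_row (fun s₀ => cnt k s₀ * tc s₀ w4)]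
        rw [h1, h2, h3, h4, h5, h6, h7]
        simp only [show tc bot w4 = 0 from by decide, show tc w1 w4 = 1 from by decide, show tc w2 w4 = 1 from by decide, show tc w3 w4 = 1 from by decide, show tc w4 w4 = 1 from by decide, show tc w5 w4 = 1 from by decide, show tc w6 w4 = 1 from by decide, show tc w7 w4 = 1 from by decide]
        show _ = (BQ (k+1)).1
        simp only [BQ]
        ring
      · rw [cnt_succ, sum_row (fun s₀ => cnt k s₀ * tc s₀ w5)]
        rw [h1, h2, h3, h4, h5, h6, h7]
        simp only [show tc bot w5 = 0 from by decide, show tc w1 w5 = 0 from by decide, show tc w2 w5 = 1 from by decide, show tc w3 w5 = 0 from by decide, show tc w4 w5 = 1 from by decide, show tc w5 w5 = 1 from by decide, show tc w6 w5 = 1 from by decide, show tc w7 w5 = 1 from by decide]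
        show _ = (BQ (k+1)).2
        simp only [BQ]
        ring
      · rw [cnt_succ, sum_row (fun s₀ => cnt k s₀ * tc s₀ w6)]
        rw [h1, h2, h3, h4, h5, h6, h7]
        simp only [show tc bot w6 = 0 from by decide, show tc w1 w6 = 1 from by decide, show tc w2 w6 = 1 from by decide, show tc w3 w6 = 1 from by decide, show tc w4 w6 = 1 from by decide, show tc w5 w6 = 1 from by decide, show tc w6 w6 = 1 from by decide, show tc w7 w6 = 1 from by decide]
        show _ = (BQ (k+1)).1
        simp only [BQ]
        ring
      · rw [cnt_succ, sum_row (fun s₀ => cnt k s₀ * tc s₀ w7)]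
        rw [h1, h2, h3, h4, h5, h6, h7]
        simp only [show tc bot w7 = 0 from by decide, show tc w1 w7 = 1 from by decide, show tc w2 w7 = 1 from by decide, show tc w3 w7 = 1 from by decide, show tc w4 w7 = 1 from by decide, show tc w5 w7 = 1 from by decide, show tc w6 w7 = 1 from by decide, show tc w7 w7 = 1 from by decide]
        show _ = (BQ (k+1)).1
        simp only [BQ]
        ring

lemma card_nonbot (n : ℕ) :
    (Finset.univ.filter (fun g : Fin (n + 1) → Row => Rs g n ≠ bot)).card =
      6 * (BQ n).1 + (BQ n).2 := by
  rw [Finset.card_eq_sum_card_fiberwise (f := fun g => Rs g n) (t := Finset.univ)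
    (fun x _ => Finset.mem_univ _)]
  rw [sum_row (fun s => ((Finset.univ.filter
      (fun g : Fin (n + 1) → Row => Rs g n ≠ bot)).filter (fun g => Rs g n = s)).card)]
  have hbot : ((Finset.univ.filter (fun g : Fin (n + 1) → Row => Rs g n ≠ bot)).filter
      (fun g => Rs g n = bot)).card = 0 := by
    rw [Finset.card_eq_zero, Finset.filter_eq_empty_iff]
    intro g hg
    simp only [Finset.mem_filter, Finset.mem_univ, true_and] at hg
    exact hg
  have hw : ∀ s : Row, s ≠ bot → ((Finset.univ.filter
      (fun g : Fin (n + 1) → Row => Rs g n ≠ bot)).filter (fun g => Rs g n = s)).card =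
      cnt n s := by
    intro s hs
    rw [cnt]
    congr 1
    rw [Finset.filter_filter]
    apply Finset.filter_congr
    intro g _
    simp only [ne_eq, decide_eq_true_eq]
    constructor
    · rintro ⟨_, h⟩; exact h
    · intro h; exact ⟨by rw [h]; exact hs, h⟩
  rw [hbot, hw w1 (by decide), hw w2 (by decide), hw w3 (by decide), hw w4 (by decide),
    hw w5 (by decide), hw w6 (by decide), hw w7 (by decide)]
  obtain ⟨h1, h2, h3, h4, h5, h6, h7⟩ := cnt_inv n
  rw [h1, h2, h3, h4, h5, h6, h7]
  ring

lemma cross_card (n : ℕ) :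
    Nat.card {f : Fin (n + 1) × Fin 3 → Bool | Crossable (n + 1) 3 f} =
      6 * (BQ n).1 + (BQ n).2 := by
  have hset : {f : Fin (n + 1) × Fin 3 → Bool | Crossable (n + 1) 3 f} =
      {f : Fin (n + 1) × Fin 3 → Bool | Rs (fun i j => f (i, j)) n ≠ bot} :=
    Set.ext (fun f => cross_iff n f)
  rw [hset]
  rw [Nat.card_eq_fintype_card]
  rw [Fintype.card_subtype]
  rw [← card_nonbot n]
  apply Finset.card_bij' (fun f _ => fun i j => f (i, j)) (fun g _ => fun x => g x.1 x.2)
  · intro f _; rfl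
  · intro g _; rfl
  · intro f hf
    simp only [Finset.mem_filter, Finset.mem_univ, true_and, Set.mem_setOf_eq] at hf ⊢
    exact hf
  · intro g hg
    simp only [Finset.mem_filter, Finset.mem_univ, true_and, Set.mem_setOf_eq] at hg ⊢
    exact hg

def cb (n : ℕ) : ℕ := 6 * (BQ n).1 + (BQ n).2

lemma cb_rec (n : ℕ) : cb (n + 2) + 2 * cb n = 7 * cb (n + 1) := by
  simp only [cb, BQ]
  ring

lemma pow_red {x : ℝ} (h : x ^ 2 = 14 * x - 8) (n : ℕ) :
    x ^ (n + 3) = 14 * x ^ (n + 2) - 8 * x ^ (n + 1) := by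
  have h1 : x ^ (n + 3) = x ^ (n + 1) * x ^ 2 := by ring
  rw [h1, h]
  ring

lemma main_real (n : ℕ) :
    41 * 2 ^ (n + 2) * (cb n : ℝ) =
      (41 - 7 * Real.sqrt 41) * (7 - Real.sqrt 41) ^ (n + 1) +
      (41 + 7 * Real.sqrt 41) * (7 + Real.sqrt 41) ^ (n + 1) := by
  set s := Real.sqrt 41 with hsdef
  have hs : s ^ 2 = 41 := Real.sq_sqrt (by norm_num)
  have key : ∀ k, (41 * 2 ^ (k + 2) * (cb k : ℝ) =
      (41 - 7 * s) * (7 - s) ^ (k + 1) + (41 + 7 * s) * (7 + s) ^ (k + 1)) ∧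
      (41 * 2 ^ (k + 3) * (cb (k + 1) : ℝ) =
      (41 - 7 * s) * (7 - s) ^ (k + 2) + (41 + 7 * s) * (7 + s) ^ (k + 2)) := by
    intro k
    induction k with
    | zero =>
        constructor
        · have h0 : cb 0 = 7 := rfl
          rw [h0]
          push_cast
          linear_combination (-14 : ℝ) * hs
        · have h1 : cb 1 = 47 := rfl
          rw [h1]
          push_cast
          linear_combination (-278 : ℝ) * hs
    | succ k ih =>
        obtain ⟨ih1, ih2⟩ := ih
        refine ⟨ih2, ?_⟩
        have hc : (cb (k + 2) : ℝ) = 7 * (cb (k + 1) : ℝ) - 2 * (cb k : ℝ) := by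
          have := cb_rec k
          have hcast : ((cb (k + 2) + 2 * cb k : ℕ) : ℝ) = ((7 * cb (k + 1) : ℕ) : ℝ) := by
            rw [this]
          push_cast at hcast
          linarith
        have hm : (7 - s) ^ 2 = 14 * (7 - s) - 8 := by linear_combination hs
        have hp : (7 + s) ^ 2 = 14 * (7 + s) - 8 := by linear_combination hs
        calc 41 * 2 ^ (k + 4) * (cb (k + 2) : ℝ)
            = 14 * (41 * 2 ^ (k + 3) * (cb (k + 1) : ℝ)) -
              8 * (41 * 2 ^ (k + 2) * (cb k : ℝ)) := by rw [hc]; ring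
          _ = 14 * ((41 - 7 * s) * (7 - s) ^ (k + 2) + (41 + 7 * s) * (7 + s) ^ (k + 2)) -
              8 * ((41 - 7 * s) * (7 - s) ^ (k + 1) + (41 + 7 * s) * (7 + s) ^ (k + 1)) := by
              rw [ih1, ih2]
          _ = (41 - 7 * s) * (7 - s) ^ (k + 3) + (41 + 7 * s) * (7 + s) ^ (k + 3) := by
              rw [pow_red hm, pow_red hp]
              ring
  exact (key n).1

theorem crossable_width_three (m : ℕ) (hm : 1 ≤ m) :
    41 * 2 ^ (m + 1) *
      (Nat.card {f : Fin m × Fin 3 → Bool | Crossable m 3 f} : ℝ) =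
    (41 - 7 * Real.sqrt 41) * (7 - Real.sqrt 41) ^ m +
    (41 + 7 * Real.sqrt 41) * (7 + Real.sqrt 41) ^ m := by
  obtain ⟨n, rfl⟩ : ∃ n, m = n + 1 := ⟨m - 1, by omega⟩
  rw [cross_card n]
  have := main_real n
  rw [show n + 2 = n + 1 + 1 from rfl] at this
  convert this using 3
  rfl
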